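/- For all a, b, c, d > 0, μ₁, μ₂ ∈ ℝ, the total integral of the 3-dimensional Full Rosenbrock kernel satisfies ∫_{ℝ³} exp(−a(x₁−μ₁)² − b(x₂−x₁²)² − c(x₂−μ₂)² − d(x₃−x₂²)²) dx = (π/√(d(b+c))) · ∫_ℝ exp(−a(x₁−μ₁)² − (bc/(b+c))(x₁²−μ₂)²) dx₁, and this integral is finite. -/

import Mathlib

open MeasureTheory Real

/-- The 3-d Full Rosenbrock kernel is integrable over `ℝ³`, and its total integral
equals `(π/√(d(b+c)))` times the one-dimensional integral
`∫ exp (-a (x₁-μ₁)² - (bc/(b+c)) (x₁²-μ₂)²) dx₁`. -/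
theorem fullRosenbrock3d_total_integral (a b c d μ₁ μ₂ : ℝ)
    (ha : 0 < a) (hb : 0 < b) (hc : 0 < c) (hd : 0 < d) :
    Integrable (fun p : ℝ × ℝ × ℝ =>
        Real.exp (-a * (p.1 - μ₁) ^ 2 - b * (p.2.1 - p.1 ^ 2) ^ 2
          - c * (p.2.1 - μ₂) ^ 2 - d * (p.2.2 - p.2.1 ^ 2) ^ 2)) ∧
      (∫ p : ℝ × ℝ × ℝ,
          Real.exp (-a * (p.1 - μ₁) ^ 2 - b * (p.2.1 - p.1 ^ 2) ^ 2
            - c * (p.2.1 - μ₂) ^ 2 - d * (p.2.2 - p.2.1 ^ 2) ^ 2))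
        = (π / Real.sqrt (d * (b + c))) *
            ∫ x₁ : ℝ,
              Real.exp (-a * (x₁ - μ₁) ^ 2 - (b * c / (b + c)) * (x₁ ^ 2 - μ₂) ^ 2) := by
  have hs : (0:ℝ) < b + c := by linarith
  set s := b + c with hs_def
  set K : ℝ → ℝ := fun x => b * c / s * (x ^ 2 - μ₂) ^ 2 with hK
  set m : ℝ → ℝ := fun x => (b * x ^ 2 + c * μ₂) / s with hm
  have hid : ∀ x₁ x₂ : ℝ, -b * (x₂ - x₁ ^ 2) ^ 2 - c * (x₂ - μ₂) ^ 2
      = -s * (x₂ - m x₁) ^ 2 + -(K x₁) := by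
    intro x₁ x₂
    simp only [hK, hm, hs_def]
    field_simp
    ring
  have hzint : ∀ y : ℝ, Integrable (fun z => Real.exp (-d * (z - y) ^ 2)) :=
    fun y => (integrable_exp_neg_mul_sq hd).comp_sub_right y
  have hzval : ∀ y : ℝ, ∫ z, Real.exp (-d * (z - y) ^ 2) = Real.sqrt (π / d) := by
    intro y
    rw [show (fun z => Real.exp (-d*(z-y)^2)) = fun z => (fun x => Real.exp (-d*x^2)) (z - y) from rfl]
    rw [integral_sub_right_eq_self (fun x => Real.exp (-d*x^2)) y, integral_gaussian]
  have hyeq : ∀ x₁ : ℝ, (fun x₂ => Real.exp (-b * (x₂ - x₁ ^ 2) ^ 2 - c * (x₂ - μ₂) ^ 2))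
      = fun x₂ => Real.exp (-s * (x₂ - m x₁) ^ 2) * Real.exp (-(K x₁)) := by
    intro x₁
    funext x₂
    rw [← Real.exp_add, ← hid x₁ x₂]
  have hyint : ∀ x₁ : ℝ, Integrable
      (fun x₂ => Real.exp (-b * (x₂ - x₁ ^ 2) ^ 2 - c * (x₂ - μ₂) ^ 2)) := by
    intro x₁
    rw [hyeq x₁]
    exact ((integrable_exp_neg_mul_sq hs).comp_sub_right (m x₁)).mul_const _
  have hyval : ∀ x₁ : ℝ, ∫ x₂, Real.exp (-b * (x₂ - x₁ ^ 2) ^ 2 - c * (x₂ - μ₂) ^ 2)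
      = Real.sqrt (π / s) * Real.exp (-(K x₁)) := by
    intro x₁
    rw [hyeq x₁, integral_mul_const]
    congr 1
    rw [show (fun x₂ => Real.exp (-s*(x₂ - m x₁)^2)) = fun z => (fun x => Real.exp (-s*x^2)) (z - m x₁) from rfl]
    rw [integral_sub_right_eq_self (fun x => Real.exp (-s*x^2)) (m x₁), integral_gaussian]
  have hKnonneg : ∀ x : ℝ, 0 ≤ K x := by
    intro x
    have : (0:ℝ) ≤ b * c / s := by positivity
    simp only [hK]
    positivity
  have hcont : Continuous (fun p : ℝ × ℝ × ℝ =>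
      Real.exp (-a * (p.1 - μ₁) ^ 2 - b * (p.2.1 - p.1 ^ 2) ^ 2
        - c * (p.2.1 - μ₂) ^ 2 - d * (p.2.2 - p.2.1 ^ 2) ^ 2)) := by fun_prop
  -- inner integrability for fixed x₁
  have hinner : ∀ x₁ : ℝ, Integrable (fun q : ℝ × ℝ =>
      Real.exp (-a * (x₁ - μ₁) ^ 2 - b * (q.1 - x₁ ^ 2) ^ 2
        - c * (q.1 - μ₂) ^ 2 - d * (q.2 - q.1 ^ 2) ^ 2)) := by
    intro x₁
    have hcont2 : Continuous (fun q : ℝ × ℝ =>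
        Real.exp (-a * (x₁ - μ₁) ^ 2 - b * (q.1 - x₁ ^ 2) ^ 2
          - c * (q.1 - μ₂) ^ 2 - d * (q.2 - q.1 ^ 2) ^ 2)) := by fun_prop
    have hvol : (volume : Measure (ℝ × ℝ)) = (volume : Measure ℝ).prod volume := rfl
    rw [hvol]
    rw [integrable_prod_iff (hvol ▸ hcont2.aestronglyMeasurable)]
    constructor
    · refine Filter.Eventually.of_forall (fun x₂ => ?_)
      have heq : (fun x₃ => Real.exp (-a * (x₁ - μ₁) ^ 2 - b * (x₂ - x₁ ^ 2) ^ 2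
          - c * (x₂ - μ₂) ^ 2 - d * (x₃ - x₂ ^ 2) ^ 2))
          = fun x₃ => Real.exp (-a * (x₁ - μ₁) ^ 2 - b * (x₂ - x₁ ^ 2) ^ 2
          - c * (x₂ - μ₂) ^ 2) * Real.exp (-d * (x₃ - x₂ ^ 2) ^ 2) := by
        funext x₃; rw [← Real.exp_add]; congr 1; ring
      rw [heq]
      exact (hzint (x₂ ^ 2)).const_mul _
    · have hval : ∀ x₂ : ℝ, (∫ x₃, ‖Real.exp (-a * (x₁ - μ₁) ^ 2 - b * (x₂ - x₁ ^ 2) ^ 2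
          - c * (x₂ - μ₂) ^ 2 - d * (x₃ - x₂ ^ 2) ^ 2)‖)
          = Real.exp (-a * (x₁ - μ₁) ^ 2) *
            Real.exp (-b * (x₂ - x₁ ^ 2) ^ 2 - c * (x₂ - μ₂) ^ 2) * Real.sqrt (π / d) := by
        intro x₂
        have heq : ∀ x₃ : ℝ, ‖Real.exp (-a * (x₁ - μ₁) ^ 2 - b * (x₂ - x₁ ^ 2) ^ 2
            - c * (x₂ - μ₂) ^ 2 - d * (x₃ - x₂ ^ 2) ^ 2)‖
            = Real.exp (-a * (x₁ - μ₁) ^ 2) *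
              Real.exp (-b * (x₂ - x₁ ^ 2) ^ 2 - c * (x₂ - μ₂) ^ 2) *
              Real.exp (-d * (x₃ - x₂ ^ 2) ^ 2) := by
          intro x₃
          rw [Real.norm_of_nonneg (Real.exp_pos _).le, ← Real.exp_add, ← Real.exp_add]
          congr 1; ring
        simp_rw [heq]
        rw [integral_const_mul, hzval (x₂ ^ 2)]
      simp_rw [hval]
      exact (((hyint x₁).const_mul _).mul_const _)
  -- the x₁-marginal value
  have hmarg : ∀ x₁ : ℝ, (∫ q : ℝ × ℝ,
      Real.exp (-a * (x₁ - μ₁) ^ 2 - b * (q.1 - x₁ ^ 2) ^ 2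
        - c * (q.1 - μ₂) ^ 2 - d * (q.2 - q.1 ^ 2) ^ 2))
      = Real.exp (-a * (x₁ - μ₁) ^ 2 - K x₁) * (Real.sqrt (π / s) * Real.sqrt (π / d)) := by
    intro x₁
    have hvol : (volume : Measure (ℝ × ℝ)) = (volume : Measure ℝ).prod volume := rfl
    have h := hinner x₁
    rw [hvol] at h ⊢
    rw [integral_prod _ h]
    have h2 : ∀ x₂ : ℝ, (∫ x₃, Real.exp (-a * (x₁ - μ₁) ^ 2 - b * (x₂ - x₁ ^ 2) ^ 2
        - c * (x₂ - μ₂) ^ 2 - d * (x₃ - x₂ ^ 2) ^ 2))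
        = Real.exp (-a * (x₁ - μ₁) ^ 2) *
          Real.exp (-b * (x₂ - x₁ ^ 2) ^ 2 - c * (x₂ - μ₂) ^ 2) * Real.sqrt (π / d) := by
      intro x₂
      have heq : ∀ x₃ : ℝ, Real.exp (-a * (x₁ - μ₁) ^ 2 - b * (x₂ - x₁ ^ 2) ^ 2
          - c * (x₂ - μ₂) ^ 2 - d * (x₃ - x₂ ^ 2) ^ 2)
          = Real.exp (-a * (x₁ - μ₁) ^ 2) *
            Real.exp (-b * (x₂ - x₁ ^ 2) ^ 2 - c * (x₂ - μ₂) ^ 2) *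
            Real.exp (-d * (x₃ - x₂ ^ 2) ^ 2) := by
        intro x₃; rw [← Real.exp_add, ← Real.exp_add]; congr 1; ring
      simp_rw [heq]
      rw [integral_const_mul, hzval (x₂ ^ 2)]
    simp_rw [h2]
    rw [integral_mul_const, integral_const_mul, hyval x₁]
    rw [show -a * (x₁ - μ₁) ^ 2 - K x₁ = -a * (x₁ - μ₁) ^ 2 + -(K x₁) from by ring,
      Real.exp_add]
    ring
  -- integrability of the marginal
  have hmargint : Integrable (fun x₁ : ℝ =>
      Real.exp (-a * (x₁ - μ₁) ^ 2 - K x₁) * (Real.sqrt (π / s) * Real.sqrt (π / d))) := by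
    refine Integrable.mul_const ?_ _
    have hcont1 : Continuous (fun x₁ : ℝ => Real.exp (-a * (x₁ - μ₁) ^ 2 - K x₁)) := by
      simp only [hK]; fun_prop
    refine Integrable.mono ((integrable_exp_neg_mul_sq ha).comp_sub_right μ₁)
      hcont1.aestronglyMeasurable ?_
    refine Filter.Eventually.of_forall (fun x => ?_)
    rw [Real.norm_of_nonneg (Real.exp_pos _).le, Real.norm_of_nonneg (Real.exp_pos _).le]
    exact Real.exp_le_exp.2 (by have := hKnonneg x; linarith)
  -- main integrability
  have hInt : Integrable (fun p : ℝ × ℝ × ℝ =>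
      Real.exp (-a * (p.1 - μ₁) ^ 2 - b * (p.2.1 - p.1 ^ 2) ^ 2
        - c * (p.2.1 - μ₂) ^ 2 - d * (p.2.2 - p.2.1 ^ 2) ^ 2)) := by
    have hvol3 : (volume : Measure (ℝ × ℝ × ℝ)) = (volume : Measure ℝ).prod volume := rfl
    rw [hvol3]
    rw [integrable_prod_iff (hvol3 ▸ hcont.aestronglyMeasurable)]
    constructor
    · exact Filter.Eventually.of_forall (fun x₁ => hinner x₁)
    · have : ∀ x₁ : ℝ, (∫ q : ℝ × ℝ, ‖Real.exp (-a * (x₁ - μ₁) ^ 2 - b * (q.1 - x₁ ^ 2) ^ 2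
          - c * (q.1 - μ₂) ^ 2 - d * (q.2 - q.1 ^ 2) ^ 2)‖)
          = Real.exp (-a * (x₁ - μ₁) ^ 2 - K x₁) * (Real.sqrt (π / s) * Real.sqrt (π / d)) := by
        intro x₁
        simp_rw [Real.norm_of_nonneg (Real.exp_pos _).le]
        exact hmarg x₁
      simp_rw [this]
      exact hmargint
  refine ⟨hInt, ?_⟩
  -- compute the total integral
  have hvol3 : (volume : Measure (ℝ × ℝ × ℝ)) = (volume : Measure ℝ).prod volume := rfl
  have h := hInt
  rw [hvol3] at h
  calc (∫ p : ℝ × ℝ × ℝ,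
          Real.exp (-a * (p.1 - μ₁) ^ 2 - b * (p.2.1 - p.1 ^ 2) ^ 2
            - c * (p.2.1 - μ₂) ^ 2 - d * (p.2.2 - p.2.1 ^ 2) ^ 2))
      = ∫ x₁ : ℝ, ∫ q : ℝ × ℝ, Real.exp (-a * (x₁ - μ₁) ^ 2 - b * (q.1 - x₁ ^ 2) ^ 2
          - c * (q.1 - μ₂) ^ 2 - d * (q.2 - q.1 ^ 2) ^ 2) := by
        rw [hvol3, integral_prod _ h]
    _ = ∫ x₁ : ℝ, Real.exp (-a * (x₁ - μ₁) ^ 2 - K x₁) * (Real.sqrt (π / s) * Real.sqrt (π / d)) := by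
        simp_rw [hmarg]
    _ = (∫ x₁ : ℝ, Real.exp (-a * (x₁ - μ₁) ^ 2 - K x₁)) * (Real.sqrt (π / s) * Real.sqrt (π / d)) := by
        rw [integral_mul_const]
    _ = (π / Real.sqrt (d * s)) * ∫ x₁ : ℝ, Real.exp (-a * (x₁ - μ₁) ^ 2 - b * c / s * (x₁ ^ 2 - μ₂) ^ 2) := by
        have hC : Real.sqrt (π / s) * Real.sqrt (π / d) = π / Real.sqrt (d * s) := by
          rw [← Real.sqrt_mul (by positivity : (0:ℝ) ≤ π / s)]
          rw [show π / s * (π / d) = π ^ 2 / (d * s) from by field_simp]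
          rw [Real.sqrt_div (by positivity) (d * s), Real.sqrt_sq pi_pos.le]
        rw [hC, mul_comm]
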